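/- arXiv:2304.11506 — 4 statements merged into one kernel-verified Lean document; each statement's English description precedes it below -/
import Mathlib

section
/- Let P and Q be coprime integers with P ≥ 2 and Q ≥ 2. Then the minimum over integers r, s with 1 ≤ r ≤ P−1 and 1 ≤ s ≤ Q−1 of the rational number h_{r,s} := ((rQ − sP)² − (P−Q)²)/(4PQ) is equal to (1 − (P−Q)²)/(4PQ); equivalently, the minimum of (rQ − sP)² over this range of (r,s) equals 1. -/
open Complex

noncomputable section

/-- The upper half-plane as a subset of ℂ. -/
def UH : Set ℂ := {z : ℂ | 0 < z.im}

/-- `e(z) = exp(2πiz)`. -/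
def ee (z : ℂ) : ℂ := Complex.exp (2 * Real.pi * Complex.I * z)

/-- Dedekind eta function `η(τ) = e(τ/24) ∏_{n≥1} (1 - e(nτ))`. -/
def etaF (τ : ℂ) : ℂ := ee (τ / 24) * ∏' n : ℕ, (1 - ee ((n + 1) * τ))

/-- `η^α(τ) = e(ατ/24) ∏_{n≥1} (1 - e(nτ))^α`, principal branch factors. -/
def etaPow (α : ℝ) (τ : ℂ) : ℂ :=
  ee ((α : ℂ) * τ / 24) * ∏' n : ℕ, (1 - ee ((n + 1) * τ)) ^ (α : ℂ)

/-- `θ_{a,b}(τ) = Σ_{n∈ℤ} e(τ)^{a (n + b/(2a))²}`. -/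
def thetaAB (a b : ℝ) (τ : ℂ) : ℂ :=
  ∑' n : ℤ, ee τ ^ (((a * ((n : ℝ) + b / (2 * a)) ^ 2 : ℝ)) : ℂ)

/-- Theta constant `Θ_{(m₁,m₂)}(τ) = Σ_{n∈ℤ} e(τ(n+m₁)²/2 + (n+m₁)m₂)`. -/
def thetaConst (m₁ m₂ : ℝ) (τ : ℂ) : ℂ :=
  ∑' n : ℤ, ee (τ * ((n : ℂ) + (m₁ : ℂ)) ^ 2 / 2 + ((n : ℂ) + (m₁ : ℂ)) * (m₂ : ℂ))

/-- Character `ch_{2,p;1,s} = (θ_{2p,p-2s} - θ_{2p,p+2s})/η`. -/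
def chMin (p s : ℤ) (τ : ℂ) : ℂ :=
  (thetaAB (2 * (p : ℝ)) ((p : ℝ) - 2 * (s : ℝ)) τ
    - thetaAB (2 * (p : ℝ)) ((p : ℝ) + 2 * (s : ℝ)) τ) / etaF τ

/-- Ibukiyama modular form `f_r(τ) = e((p-1)(r-1)/(4p)) Θ_{(r/(2p),1/2)}(pτ) / η^{3/p}(τ)`. -/
def ibuki (p r : ℤ) (τ : ℂ) : ℂ :=
  ee ((((p : ℂ) - 1) * ((r : ℂ) - 1)) / (4 * (p : ℂ)))
    * thetaConst ((r : ℝ) / (2 * (p : ℝ))) (1 / 2) ((p : ℂ) * τ) / etaPow (3 / (p : ℝ)) τ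

/-- `D = (2πi)⁻¹ d/dτ`. -/
def Dop (f : ℂ → ℂ) (τ : ℂ) : ℂ := (2 * Real.pi * Complex.I)⁻¹ * deriv f τ

/-- Normalized Eisenstein series `E₂`. -/
def E2 (τ : ℂ) : ℂ :=
  1 - 24 * ∑' n : ℕ, ((ArithmeticFunction.sigma 1) (n + 1) : ℂ) * ee τ ^ (n + 1)

/-- Normalized Eisenstein series `E₄`. -/
def E4 (τ : ℂ) : ℂ :=
  1 + 240 * ∑' n : ℕ, ((ArithmeticFunction.sigma 3) (n + 1) : ℂ) * ee τ ^ (n + 1)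

/-- Normalized Eisenstein series `E₆`. -/
def E6 (τ : ℂ) : ℂ :=
  1 - 504 * ∑' n : ℕ, ((ArithmeticFunction.sigma 5) (n + 1) : ℂ) * ee τ ^ (n + 1)

def E8 (τ : ℂ) : ℂ := E4 τ ^ 2
def E10 (τ : ℂ) : ℂ := E4 τ * E6 τ
def E14 (τ : ℂ) : ℂ := E4 τ ^ 2 * E6 τ

/-- Discriminant `Δ = q ∏_{n≥1}(1-qⁿ)²⁴`. -/
def Δfun (τ : ℂ) : ℂ := ee τ * ∏' n : ℕ, (1 - ee τ ^ (n + 1)) ^ 24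

/-- Serre operator `𝔡_k f = Df - (k/12) E₂ f`. -/
def serre (k : ℝ) (f : ℂ → ℂ) (τ : ℂ) : ℂ := Dop f τ - ((k : ℂ) / 12) * E2 τ * f τ

/-- Iterated Serre operator `𝔡_k^i = 𝔡_{k+2(i-1)} ∘ ⋯ ∘ 𝔡_{k+2} ∘ 𝔡_k`. -/
def serreIter (k : ℝ) : ℕ → (ℂ → ℂ) → (ℂ → ℂ)
  | 0, f => f
  | (i + 1), f => serre (k + 2 * (i : ℝ)) (serreIter k i f)

/-- A holomorphic modular form of integral weight `k` on `SL₂(ℤ)`: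
holomorphic on the upper half-plane, weight-`k` invariant, and bounded near `i∞`. -/
def IsHolModularForm (k : ℤ) (P : ℂ → ℂ) : Prop :=
  DifferentiableOn ℂ P UH ∧
  (∀ γ : Matrix.SpecialLinearGroup (Fin 2) ℤ, ∀ τ ∈ UH,
      P ((((γ 0 0 : ℤ) : ℂ) * τ + ((γ 0 1 : ℤ) : ℂ)) / (((γ 1 0 : ℤ) : ℂ) * τ + ((γ 1 1 : ℤ) : ℂ)))
        = (((γ 1 0 : ℤ) : ℂ) * τ + ((γ 1 1 : ℤ) : ℂ)) ^ k * P τ) ∧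
  ∃ C A : ℝ, ∀ τ ∈ UH, A ≤ τ.im → ‖P τ‖ ≤ C

end

/-- minimum of the conformal weights of the minimal model of type (P,Q). -/
theorem stmt_0 (P Q : ℤ) (hP : 2 ≤ P) (hQ : 2 ≤ Q) (hPQ : IsCoprime P Q) :
    IsLeast { h : ℚ | ∃ r s : ℤ, 1 ≤ r ∧ r ≤ P - 1 ∧ 1 ≤ s ∧ s ≤ Q - 1 ∧
        h = (((r : ℚ) * Q - (s : ℚ) * P) ^ 2 - ((P : ℚ) - Q) ^ 2) / (4 * (P : ℚ) * Q) }
      ((1 - ((P : ℚ) - Q) ^ 2) / (4 * (P : ℚ) * Q)) ∧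
    IsLeast { m : ℤ | ∃ r s : ℤ, 1 ≤ r ∧ r ≤ P - 1 ∧ 1 ≤ s ∧ s ≤ Q - 1 ∧
        m = (r * Q - s * P) ^ 2 } 1 := by

  have hP0 : (0:ℤ) < P := by linarith
  have hQ0 : (0:ℤ) < Q := by linarith
  -- existence of r, s with r*Q - s*P = 1 in the required ranges
  obtain ⟨a, b, hab⟩ := id hPQ
  set r : ℤ := b % P with hrdef
  have hrlt : r < P := Int.emod_lt_of_pos b hP0
  have hr0 : 0 ≤ r := Int.emod_nonneg b (by omega)
  have hbdiv := Int.emod_add_mul_ediv b P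
  have hdvd : P ∣ r * Q - 1 := by
    refine ⟨-a - b / P * Q, ?_⟩
    have h1 : r = b - P * (b / P) := by omega
    rw [h1]; linear_combination hab
  have hrne : r ≠ 0 := by
    intro h
    rw [h] at hdvd
    have h2 : P ∣ (1:ℤ) := (Int.dvd_neg).mp (by simpa using hdvd)
    have := Int.le_of_dvd one_pos h2
    omega
  set s : ℤ := (r * Q - 1) / P with hsdef
  have hs : P * s = r * Q - 1 := Int.mul_ediv_cancel' hdvd
  have hr1 : 1 ≤ r := by omega
  have hs1 : 1 ≤ s := by nlinarith
  have hsQ : s ≤ Q - 1 := by nlinarith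
  have hrQ : r * Q - s * P = 1 := by linarith
  -- no member can have r*Q = s*P
  have hne : ∀ r' s' : ℤ, 1 ≤ r' → r' ≤ P - 1 → 1 ≤ s' → s' ≤ Q - 1 →
      r' * Q - s' * P ≠ 0 := by
    intro r' s' h1 h2 h3 h4 h
    have hdvd' : P ∣ r' * Q := ⟨s', by linarith⟩
    have hdr : P ∣ r' := hPQ.dvd_of_dvd_mul_right hdvd'
    have := Int.le_of_dvd (by omega) hdr
    omega
  have hsq : ∀ r' s' : ℤ, 1 ≤ r' → r' ≤ P - 1 → 1 ≤ s' → s' ≤ Q - 1 →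
      1 ≤ (r' * Q - s' * P) ^ 2 := by
    intro r' s' h1 h2 h3 h4
    have h := hne r' s' h1 h2 h3 h4
    have : 1 ≤ |r' * Q - s' * P| := Int.one_le_abs (by omega)
    nlinarith [abs_nonneg (r' * Q - s' * P), _root_.sq_abs (r' * Q - s' * P)]
  constructor
  · constructor
    · exact ⟨r, s, hr1, by omega, hs1, hsQ, by
        push_cast
        rw [show ((r:ℚ) * Q - (s:ℚ) * P) = 1 by exact_mod_cast congrArg (Int.cast : ℤ → ℚ) hrQ]
        norm_num⟩
    · rintro h ⟨r', s', h1, h2, h3, h4, rfl⟩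
      have hx : (1:ℚ) ≤ ((r':ℚ) * Q - (s':ℚ) * P) ^ 2 := by
        have := hsq r' s' h1 h2 h3 h4
        have : (1:ℚ) ≤ (((r' * Q - s' * P) ^ 2 : ℤ) : ℚ) := by exact_mod_cast this
        push_cast at this
        linarith
      have hd : (0:ℚ) < 4 * (P:ℚ) * Q := by
        have : (0:ℚ) < (P:ℚ) := by exact_mod_cast hP0
        have : (0:ℚ) < (Q:ℚ) := by exact_mod_cast hQ0
        positivity
      gcongr
  · constructor
    · exact ⟨r, s, hr1, by omega, hs1, hsQ, by rw [hrQ]; norm_num⟩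
    · rintro m ⟨r', s', h1, h2, h3, h4, rfl⟩
      exact hsq r' s' h1 h2 h3 h4
end

section
/- Let r be a positive integer and set p = 2r + 3. Then the least positive integer n such that n·(3(p − 2s)² − p)/(24p) is an integer for every integer s with 0 ≤ s ≤ (p−1)/2 is equal to 12(2r+3)/(gcd(4,r)·gcd(3,r)). Equivalently, the least common multiple of the denominators of the irreducible fractions (3(p−2s)² − p)/(24p), for 0 ≤ s ≤ (p−1)/2, equals 12(2r+3)/(gcd(4,r)·gcd(3,r)). -/
open Complex

private lemma copH {c p : ℕ} (h : Nat.gcd (p % c) c = 1) : Nat.Coprime c p := by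
  rw [Nat.Coprime, Nat.gcd_rec]; exact h

private lemma h4full {n r : ℕ} (h : 4 ∣ n * r) (hodd : r % 2 = 1) : 4 ∣ n := by
  have cop : Nat.Coprime 4 r := by
    have h14 : r % 4 = 1 ∨ r % 4 = 3 := by omega
    rcases h14 with h'|h' <;> exact copH (by rw [h']; decide)
  exact cop.dvd_of_dvd_mul_right h

private lemma h4two {n r : ℕ} (h : 4 ∣ n * r) (h2 : r % 4 = 2) : 2 ∣ n := by
  obtain ⟨r', rfl⟩ : ∃ r', r = 2 * r' := ⟨r / 2, by omega⟩
  have ho : r' % 2 = 1 := by omega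
  have h' : 2 * 2 ∣ 2 * (n * r') := by
    have e : n * (2 * r') = 2 * (n * r') := by ring
    rw [e] at h; exact h
  have h'' : 2 ∣ n * r' := (Nat.mul_dvd_mul_iff_left (by norm_num : 0 < 2)).mp h'
  have cop : Nat.Coprime 2 r' := copH (by rw [ho]; decide)
  exact cop.dvd_of_dvd_mul_right h''

private lemma h3one {n r : ℕ} (h : 3 ∣ n * (2 * r)) (h3 : r % 3 ≠ 0) : 3 ∣ n := by
  have cop : Nat.Coprime 3 (2 * r) := by
    have h' : (2 * r) % 3 = 1 ∨ (2 * r) % 3 = 2 := by omega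
    rcases h' with h'|h' <;> exact copH (by rw [h']; decide)
  exact cop.dvd_of_dvd_mul_right h

private lemma master {r n : ℕ} (hn0 : 0 < n) (hp : (2 * r + 3) ∣ n)
    (h4 : 4 ∣ n * r) (h3 : 3 ∣ n * (2 * r)) :
    12 * (2 * r + 3) / (Nat.gcd 4 r * Nat.gcd 3 r) ≤ n := by
  have hv : r % 12 = 0 ∨ r % 12 = 1 ∨ r % 12 = 2 ∨ r % 12 = 3 ∨ r % 12 = 4 ∨ r % 12 = 5 ∨
      r % 12 = 6 ∨ r % 12 = 7 ∨ r % 12 = 8 ∨ r % 12 = 9 ∨ r % 12 = 10 ∨ r % 12 = 11 := by omega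
  have hple := Nat.le_of_dvd hn0 hp
  rcases hv with h|h|h|h|h|h|h|h|h|h|h|h
  · -- g4=4 g3=3 coef 1
    have e4 : Nat.gcd 4 r = 4 := by rw [Nat.gcd_rec, show r % 4 = 0 by omega]; decide
    have e3 : Nat.gcd 3 r = 3 := by rw [Nat.gcd_rec, show r % 3 = 0 by omega]; decide
    rw [e4, e3]; omega
  · -- coef 12, p%12=5
    have e4 : Nat.gcd 4 r = 1 := by rw [Nat.gcd_rec, show r % 4 = 1 by omega]; decide
    have e3 : Nat.gcd 3 r = 1 := by rw [Nat.gcd_rec, show r % 3 = 1 by omega]; decide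
    have ha : 4 ∣ n := h4full h4 (by omega)
    have hb : 3 ∣ n := h3one h3 (by omega)
    have hab : 4 * 3 ∣ n := (by decide : Nat.Coprime 4 3).mul_dvd_of_dvd_of_dvd ha hb
    have cop : Nat.Coprime 12 (2 * r + 3) := copH (by rw [show (2 * r + 3) % 12 = 5 by omega]; decide)
    have hd : 12 * (2 * r + 3) ∣ n := cop.mul_dvd_of_dvd_of_dvd (by norm_num at hab; exact hab) hp
    have := Nat.le_of_dvd hn0 hd
    rw [e4, e3]; omega
  · -- coef 6, p%6=1
    have e4 : Nat.gcd 4 r = 2 := by rw [Nat.gcd_rec, show r % 4 = 2 by omega]; decide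
    have e3 : Nat.gcd 3 r = 1 := by rw [Nat.gcd_rec, show r % 3 = 2 by omega]; decide
    have ha : 2 ∣ n := h4two h4 (by omega)
    have hb : 3 ∣ n := h3one h3 (by omega)
    have hab : 2 * 3 ∣ n := (by decide : Nat.Coprime 2 3).mul_dvd_of_dvd_of_dvd ha hb
    have cop : Nat.Coprime 6 (2 * r + 3) := copH (by rw [show (2 * r + 3) % 6 = 1 by omega]; decide)
    have hd : 6 * (2 * r + 3) ∣ n := cop.mul_dvd_of_dvd_of_dvd (by norm_num at hab; exact hab) hp
    have := Nat.le_of_dvd hn0 hd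
    rw [e4, e3]; omega
  · -- coef 4, p%4=1
    have e4 : Nat.gcd 4 r = 1 := by rw [Nat.gcd_rec, show r % 4 = 3 by omega]; decide
    have e3 : Nat.gcd 3 r = 3 := by rw [Nat.gcd_rec, show r % 3 = 0 by omega]; decide
    have ha : 4 ∣ n := h4full h4 (by omega)
    have cop : Nat.Coprime 4 (2 * r + 3) := copH (by rw [show (2 * r + 3) % 4 = 1 by omega]; decide)
    have hd : 4 * (2 * r + 3) ∣ n := cop.mul_dvd_of_dvd_of_dvd ha hp
    have := Nat.le_of_dvd hn0 hd
    rw [e4, e3]; omega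
  · -- coef 3, p%3=2
    have e4 : Nat.gcd 4 r = 4 := by rw [Nat.gcd_rec, show r % 4 = 0 by omega]; decide
    have e3 : Nat.gcd 3 r = 1 := by rw [Nat.gcd_rec, show r % 3 = 1 by omega]; decide
    have hb : 3 ∣ n := h3one h3 (by omega)
    have cop : Nat.Coprime 3 (2 * r + 3) := copH (by rw [show (2 * r + 3) % 3 = 2 by omega]; decide)
    have hd : 3 * (2 * r + 3) ∣ n := cop.mul_dvd_of_dvd_of_dvd hb hp
    have := Nat.le_of_dvd hn0 hd
    rw [e4, e3]; omega
  · -- coef 12, p%12=1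
    have e4 : Nat.gcd 4 r = 1 := by rw [Nat.gcd_rec, show r % 4 = 1 by omega]; decide
    have e3 : Nat.gcd 3 r = 1 := by rw [Nat.gcd_rec, show r % 3 = 2 by omega]; decide
    have ha : 4 ∣ n := h4full h4 (by omega)
    have hb : 3 ∣ n := h3one h3 (by omega)
    have hab : 4 * 3 ∣ n := (by decide : Nat.Coprime 4 3).mul_dvd_of_dvd_of_dvd ha hb
    have cop : Nat.Coprime 12 (2 * r + 3) := copH (by rw [show (2 * r + 3) % 12 = 1 by omega]; decide)
    have hd : 12 * (2 * r + 3) ∣ n := cop.mul_dvd_of_dvd_of_dvd (by norm_num at hab; exact hab) hp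
    have := Nat.le_of_dvd hn0 hd
    rw [e4, e3]; omega
  · -- coef 2, p odd
    have e4 : Nat.gcd 4 r = 2 := by rw [Nat.gcd_rec, show r % 4 = 2 by omega]; decide
    have e3 : Nat.gcd 3 r = 3 := by rw [Nat.gcd_rec, show r % 3 = 0 by omega]; decide
    have ha : 2 ∣ n := h4two h4 (by omega)
    have cop : Nat.Coprime 2 (2 * r + 3) := copH (by rw [show (2 * r + 3) % 2 = 1 by omega]; decide)
    have hd : 2 * (2 * r + 3) ∣ n := cop.mul_dvd_of_dvd_of_dvd ha hp
    have := Nat.le_of_dvd hn0 hd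
    rw [e4, e3]; omega
  · -- coef 12, p%12=5
    have e4 : Nat.gcd 4 r = 1 := by rw [Nat.gcd_rec, show r % 4 = 3 by omega]; decide
    have e3 : Nat.gcd 3 r = 1 := by rw [Nat.gcd_rec, show r % 3 = 1 by omega]; decide
    have ha : 4 ∣ n := h4full h4 (by omega)
    have hb : 3 ∣ n := h3one h3 (by omega)
    have hab : 4 * 3 ∣ n := (by decide : Nat.Coprime 4 3).mul_dvd_of_dvd_of_dvd ha hb
    have cop : Nat.Coprime 12 (2 * r + 3) := copH (by rw [show (2 * r + 3) % 12 = 5 by omega]; decide)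
    have hd : 12 * (2 * r + 3) ∣ n := cop.mul_dvd_of_dvd_of_dvd (by norm_num at hab; exact hab) hp
    have := Nat.le_of_dvd hn0 hd
    rw [e4, e3]; omega
  · -- coef 3, p%3=1
    have e4 : Nat.gcd 4 r = 4 := by rw [Nat.gcd_rec, show r % 4 = 0 by omega]; decide
    have e3 : Nat.gcd 3 r = 1 := by rw [Nat.gcd_rec, show r % 3 = 2 by omega]; decide
    have hb : 3 ∣ n := h3one h3 (by omega)
    have cop : Nat.Coprime 3 (2 * r + 3) := copH (by rw [show (2 * r + 3) % 3 = 1 by omega]; decide)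
    have hd : 3 * (2 * r + 3) ∣ n := cop.mul_dvd_of_dvd_of_dvd hb hp
    have := Nat.le_of_dvd hn0 hd
    rw [e4, e3]; omega
  · -- coef 4, p%4=1
    have e4 : Nat.gcd 4 r = 1 := by rw [Nat.gcd_rec, show r % 4 = 1 by omega]; decide
    have e3 : Nat.gcd 3 r = 3 := by rw [Nat.gcd_rec, show r % 3 = 0 by omega]; decide
    have ha : 4 ∣ n := h4full h4 (by omega)
    have cop : Nat.Coprime 4 (2 * r + 3) := copH (by rw [show (2 * r + 3) % 4 = 1 by omega]; decide)
    have hd : 4 * (2 * r + 3) ∣ n := cop.mul_dvd_of_dvd_of_dvd ha hp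
    have := Nat.le_of_dvd hn0 hd
    rw [e4, e3]; omega
  · -- coef 6, p%6=5
    have e4 : Nat.gcd 4 r = 2 := by rw [Nat.gcd_rec, show r % 4 = 2 by omega]; decide
    have e3 : Nat.gcd 3 r = 1 := by rw [Nat.gcd_rec, show r % 3 = 1 by omega]; decide
    have ha : 2 ∣ n := h4two h4 (by omega)
    have hb : 3 ∣ n := h3one h3 (by omega)
    have hab : 2 * 3 ∣ n := (by decide : Nat.Coprime 2 3).mul_dvd_of_dvd_of_dvd ha hb
    have cop : Nat.Coprime 6 (2 * r + 3) := copH (by rw [show (2 * r + 3) % 6 = 5 by omega]; decide)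
    have hd : 6 * (2 * r + 3) ∣ n := cop.mul_dvd_of_dvd_of_dvd (by norm_num at hab; exact hab) hp
    have := Nat.le_of_dvd hn0 hd
    rw [e4, e3]; omega
  · -- coef 12, p%12=1
    have e4 : Nat.gcd 4 r = 1 := by rw [Nat.gcd_rec, show r % 4 = 3 by omega]; decide
    have e3 : Nat.gcd 3 r = 1 := by rw [Nat.gcd_rec, show r % 3 = 2 by omega]; decide
    have ha : 4 ∣ n := h4full h4 (by omega)
    have hb : 3 ∣ n := h3one h3 (by omega)
    have hab : 4 * 3 ∣ n := (by decide : Nat.Coprime 4 3).mul_dvd_of_dvd_of_dvd ha hb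
    have cop : Nat.Coprime 12 (2 * r + 3) := copH (by rw [show (2 * r + 3) % 12 = 1 by omega]; decide)
    have hd : 12 * (2 * r + 3) ∣ n := cop.mul_dvd_of_dvd_of_dvd (by norm_num at hab; exact hab) hp
    have := Nat.le_of_dvd hn0 hd
    rw [e4, e3]; omega

/-- the least positive integer `n` with `n·(3(p-2s)² - p)/(24p) ∈ ℤ`
for all `0 ≤ s ≤ (p-1)/2`, where `p = 2r+3`, is `12(2r+3)/(gcd(4,r)·gcd(3,r))`. -/
theorem stmt_2 (r : ℕ) (hr : 0 < r) :
    IsLeast { n : ℕ | 0 < n ∧ ∀ s : ℕ, s ≤ (2 * r + 3 - 1) / 2 →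
        ∃ m : ℤ, (n : ℚ) * ((3 * ((2 * r + 3 : ℚ) - 2 * s) ^ 2 - (2 * r + 3))
            / (24 * (2 * r + 3))) = (m : ℚ) }
      (12 * (2 * r + 3) / (Nat.gcd 4 r * Nat.gcd 3 r)) := by
  have hP : (24 * ((2 * r + 3 : ℚ))) ≠ 0 := by positivity
  have hiff : ∀ n s : ℕ,
      (∃ m : ℤ, (n : ℚ) * ((3 * ((2 * r + 3 : ℚ) - 2 * s) ^ 2 - (2 * r + 3))
          / (24 * (2 * r + 3))) = (m : ℚ)) ↔
      (24 * (2 * (r : ℤ) + 3)) ∣ (n : ℤ) * (3 * (2 * (r : ℤ) + 3 - 2 * s) ^ 2 - (2 * r + 3)) := by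
    intro n s
    constructor
    · rintro ⟨m, hm⟩
      rw [← mul_div_assoc, div_eq_iff hP] at hm
      refine ⟨m, ?_⟩
      have key : (((n : ℤ) * (3 * (2 * (r : ℤ) + 3 - 2 * s) ^ 2 - (2 * r + 3)) : ℤ) : ℚ)
          = ((24 * (2 * (r : ℤ) + 3) * m : ℤ) : ℚ) := by
        push_cast
        push_cast at hm
        linear_combination hm
      exact_mod_cast key
    · rintro ⟨m, hm⟩
      refine ⟨m, ?_⟩
      rw [← mul_div_assoc, div_eq_iff hP]
      have key : (((n : ℤ) * (3 * (2 * (r : ℤ) + 3 - 2 * s) ^ 2 - (2 * r + 3)) : ℤ) : ℚ)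
          = ((24 * (2 * (r : ℤ) + 3) * m : ℤ) : ℚ) := by exact_mod_cast congrArg (fun z : ℤ => (z : ℚ)) hm
      push_cast at key ⊢
      linear_combination key
  constructor
  · -- membership
    have hgdvd : (Nat.gcd 4 r * Nat.gcd 3 r) ∣ 12 * (2 * r + 3) :=
      (mul_dvd_mul (Nat.gcd_dvd_left 4 r) (Nat.gcd_dvd_left 3 r)).trans ⟨2 * r + 3, by ring⟩
    have hNg : (12 * (2 * r + 3) / (Nat.gcd 4 r * Nat.gcd 3 r)) * (Nat.gcd 4 r * Nat.gcd 3 r)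
        = 12 * (2 * r + 3) := Nat.div_mul_cancel hgdvd
    have hNpos : 0 < 12 * (2 * r + 3) / (Nat.gcd 4 r * Nat.gcd 3 r) := by
      rcases Nat.eq_zero_or_pos (12 * (2 * r + 3) / (Nat.gcd 4 r * Nat.gcd 3 r)) with h|h
      · rw [h, zero_mul] at hNg; omega
      · exact h
    refine ⟨hNpos, ?_⟩
    intro s hs
    rw [hiff]
    -- divisibility
    have hA : 3 * (2 * (r : ℤ) + 3 - 2 * (s : ℤ)) ^ 2 - (2 * (r : ℤ) + 3)
        = 2 * (6 * (((r : ℤ) + 1 - s) * ((r : ℤ) + 1 - s + 1)) - r) := by ring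
    obtain ⟨j, hj⟩ := Int.even_mul_succ_self ((r : ℤ) + 1 - s)
    have hd4 : ((Nat.gcd 4 r : ℕ) : ℤ) ∣ (6 * (((r : ℤ) + 1 - s) * ((r : ℤ) + 1 - s + 1)) - r) := by
      have h1 : ((Nat.gcd 4 r : ℕ) : ℤ) ∣ 12 * j := by
        have : ((Nat.gcd 4 r : ℕ) : ℤ) ∣ 12 := by exact_mod_cast (Nat.gcd_dvd_left 4 r).trans ⟨3, rfl⟩
        exact this.mul_right j
      have h2 : ((Nat.gcd 4 r : ℕ) : ℤ) ∣ (r : ℤ) := Int.natCast_dvd_natCast.mpr (Nat.gcd_dvd_right 4 r)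
      have e : 6 * (((r : ℤ) + 1 - s) * ((r : ℤ) + 1 - s + 1)) - (r : ℤ) = 12 * j - r := by
        rw [hj]; ring
      rw [e]; exact dvd_sub h1 h2
    have hd3 : ((Nat.gcd 3 r : ℕ) : ℤ) ∣ (6 * (((r : ℤ) + 1 - s) * ((r : ℤ) + 1 - s + 1)) - r) := by
      have h1 : ((Nat.gcd 3 r : ℕ) : ℤ) ∣ 6 * (((r : ℤ) + 1 - s) * ((r : ℤ) + 1 - s + 1)) := by
        have h3 : ((Nat.gcd 3 r : ℕ) : ℤ) ∣ 3 := by exact_mod_cast Nat.gcd_dvd_left 3 r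
        exact h3.trans ⟨2 * (((r : ℤ) + 1 - s) * ((r : ℤ) + 1 - s + 1)), by ring⟩
      have h2 : ((Nat.gcd 3 r : ℕ) : ℤ) ∣ (r : ℤ) := Int.natCast_dvd_natCast.mpr (Nat.gcd_dvd_right 3 r)
      exact dvd_sub h1 h2
    have cop : IsCoprime ((Nat.gcd 4 r : ℕ) : ℤ) ((Nat.gcd 3 r : ℕ) : ℤ) := by
      rw [Nat.isCoprime_iff_coprime]
      exact Nat.Coprime.coprime_dvd_left (Nat.gcd_dvd_left 4 r)
        (Nat.Coprime.coprime_dvd_right (Nat.gcd_dvd_left 3 r) (by decide))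
    obtain ⟨B, hB⟩ := cop.mul_dvd hd4 hd3
    refine ⟨B, ?_⟩
    rw [hA, hB]
    have hNg' : ((12 * (2 * r + 3) / (Nat.gcd 4 r * Nat.gcd 3 r) : ℕ) : ℤ)
        * (((Nat.gcd 4 r : ℕ) : ℤ) * ((Nat.gcd 3 r : ℕ) : ℤ)) = 12 * (2 * (r : ℤ) + 3) := by
      exact_mod_cast congrArg (Nat.cast (R := ℤ)) hNg
    linear_combination 2 * B * hNg'
  · -- lower bound
    rintro n ⟨hn0, hall⟩
    have d0 := (hiff n (r + 1)).mp (hall (r + 1) (by omega))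
    have d1 := (hiff n r).mp (hall r (by omega))
    have d0' : (24 * (2 * (r : ℤ) + 3)) ∣ (n : ℤ) * (2 * r) := by
      obtain ⟨m, hm⟩ := d0
      refine ⟨-m, ?_⟩
      push_cast at hm ⊢
      linear_combination -hm
    have d1' : (24 * (2 * (r : ℤ) + 3)) ∣ (n : ℤ) * (24 - 2 * r) := by
      obtain ⟨m, hm⟩ := d1
      refine ⟨m, ?_⟩
      push_cast at hm ⊢
      linear_combination hm
    have hp : (2 * r + 3) ∣ n := by
      have h24 : (24 * (2 * (r : ℤ) + 3)) ∣ (24 : ℤ) * n := by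
        have hadd := dvd_add d1' d0'
        have e : (n : ℤ) * (24 - 2 * r) + (n : ℤ) * (2 * r) = 24 * n := by ring
        rwa [e] at hadd
      obtain ⟨e, he⟩ := h24
      have : ((2 * r + 3 : ℕ) : ℤ) ∣ (n : ℤ) := by
        refine ⟨e, ?_⟩
        push_cast
        linarith
      exact_mod_cast this
    have h4 : 4 ∣ n * r := by
      have h8 : (8 : ℤ) ∣ (n : ℤ) * (2 * r) := dvd_trans ⟨3 * (2 * (r : ℤ) + 3), by ring⟩ d0'
      obtain ⟨e, he⟩ := h8
      have : (4 : ℤ) ∣ ((n * r : ℕ) : ℤ) := by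
        refine ⟨e, ?_⟩
        push_cast
        linarith
      exact_mod_cast this
    have h3 : 3 ∣ n * (2 * r) := by
      have h3' : (3 : ℤ) ∣ (n : ℤ) * (2 * r) := dvd_trans ⟨8 * (2 * (r : ℤ) + 3), by ring⟩ d0'
      have : (3 : ℤ) ∣ ((n * (2 * r) : ℕ) : ℤ) := by push_cast; exact h3'
      exact_mod_cast this
    exact master hn0 hp h4 h3
end

section
/- Let p > 3 be an odd integer and let r be an odd integer with 1 ≤ r ≤ p−2. Then for every τ ∈ ℍ, f_r(τ + 1) = e((r² − 1)/(8p)) · f_r(τ). Equivalently, since the multiplier v_p(T) equals e((p² − 1)/(8p)), the action π_p(T) multiplies f_r by e((r² − p²)/(8p)). -/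
open Complex

lemma ee_add (a b : ℂ) : ee (a + b) = ee a * ee b := by
  rw [ee, ee, ee, ← Complex.exp_add]; ring_nf

lemma ee_int (n : ℤ) : ee (n : ℂ) = 1 := by
  rw [ee, show (2 : ℂ) * Real.pi * Complex.I * n = n * (2 * Real.pi * Complex.I) by ring,
    Complex.exp_int_mul_two_pi_mul_I]

lemma ee_ne_zero (z : ℂ) : ee z ≠ 0 := Complex.exp_ne_zero _

lemma theta_step (p r : ℤ) (hpodd : Odd p) (hrodd : Odd r) (hp0 : (p : ℂ) ≠ 0) (τ : ℂ) :
    thetaConst ((r : ℝ) / (2 * (p : ℝ))) (1 / 2) ((p : ℂ) * (τ + 1))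
      = ee ((r : ℂ) ^ 2 / (8 * (p : ℂ)))
        * thetaConst ((r : ℝ) / (2 * (p : ℝ))) (1 / 2) ((p : ℂ) * τ) := by
  unfold thetaConst
  rw [← tsum_mul_left]
  apply tsum_congr
  intro n
  have heven : Even (n * (p * n + r)) := by
    rcases Int.even_or_odd n with h | h
    · exact h.mul_right _
    · exact ((hpodd.mul h).add_odd hrodd).mul_left _
  obtain ⟨k, hk⟩ := heven
  have hkc : (n : ℂ) * ((p : ℂ) * n + r) = (k : ℂ) + (k : ℂ) := by exact_mod_cast hk
  have hcast : ((((r : ℝ) / (2 * (p : ℝ))) : ℝ) : ℂ) = (r : ℂ) / (2 * (p : ℂ)) := by push_cast; ring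
  have hhalf : (((1 : ℝ) / 2 : ℝ) : ℂ) = 1 / 2 := by norm_num
  rw [hcast, hhalf]
  have key : (p : ℂ) * (τ + 1) * ((n : ℂ) + (r : ℂ) / (2 * (p : ℂ))) ^ 2 / 2
        + ((n : ℂ) + (r : ℂ) / (2 * (p : ℂ))) * (1 / 2)
      = (r : ℂ) ^ 2 / (8 * (p : ℂ))
        + ((p : ℂ) * τ * ((n : ℂ) + (r : ℂ) / (2 * (p : ℂ))) ^ 2 / 2
          + ((n : ℂ) + (r : ℂ) / (2 * (p : ℂ))) * (1 / 2)) + (k : ℂ) := by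
    have hstep : (p : ℂ) * ((n : ℂ) + (r : ℂ) / (2 * (p : ℂ))) ^ 2 / 2
        = (k : ℂ) + (r : ℂ) ^ 2 / (8 * (p : ℂ)) := by
      field_simp
      linear_combination (32 * (p : ℂ)) * hkc
    linear_combination hstep
  rw [key, ee_add, ee_add, ee_int]
  ring

lemma eta_step (α : ℝ) (τ : ℂ) :
    etaPow α (τ + 1) = ee ((α : ℂ) / 24) * etaPow α τ := by
  unfold etaPow
  have hprod : ∏' n : ℕ, (1 - ee (((n : ℂ) + 1) * (τ + 1))) ^ (α : ℂ)
      = ∏' n : ℕ, (1 - ee (((n : ℂ) + 1) * τ)) ^ (α : ℂ) := by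
    apply tprod_congr
    intro n
    have : ((n : ℂ) + 1) * (τ + 1) = ((n : ℂ) + 1) * τ + ((n + 1 : ℤ) : ℂ) := by
      push_cast; ring
    rw [this, ee_add, ee_int, mul_one]
  rw [hprod, show (α : ℂ) * (τ + 1) / 24 = (α : ℂ) * τ / 24 + (α : ℂ) / 24 by ring, ee_add]
  ring

/-- `f_r(τ+1) = e((r²-1)/(8p))·f_r(τ)`; equivalently, since
`v_p(T) = e((p²-1)/(8p))`, the action of `T` multiplies `f_r` by `e((r²-p²)/(8p))`. -/
theorem stmt_5 (p r : ℤ) (hp : 3 < p) (hpodd : Odd p) (hrodd : Odd r)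
    (hr1 : 1 ≤ r) (hr2 : r ≤ p - 2) (τ : ℂ) (hτ : τ ∈ UH) :
    ibuki p r (τ + 1) = ee (((r : ℂ) ^ 2 - 1) / (8 * (p : ℂ))) * ibuki p r τ ∧
    ibuki p r (τ + 1)
      = ee (((p : ℂ) ^ 2 - 1) / (8 * (p : ℂ)))
          * (ee (((r : ℂ) ^ 2 - (p : ℂ) ^ 2) / (8 * (p : ℂ))) * ibuki p r τ) := by
  have hp0 : (p : ℂ) ≠ 0 := by
    have : (3 : ℤ) < p := hp
    exact_mod_cast (by omega : p ≠ 0)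
  have h1 : ibuki p r (τ + 1)
      = ee ((r : ℂ) ^ 2 / (8 * (p : ℂ))) / ee (((3 / (p : ℝ) : ℝ) : ℂ) / 24)
          * ibuki p r τ := by
    unfold ibuki
    rw [show (p : ℂ) * (τ + 1) = (p : ℂ) * (τ + 1) from rfl,
      theta_step p r hpodd hrodd hp0 τ, eta_step (3 / (p : ℝ)) τ]
    simp only [div_eq_mul_inv, mul_inv]
    ring
  have hee : ee (((r : ℂ) ^ 2 - 1) / (8 * (p : ℂ))) * ee (((3 / (p : ℝ) : ℝ) : ℂ) / 24)
      = ee ((r : ℂ) ^ 2 / (8 * (p : ℂ))) := by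
    rw [← ee_add]
    congr 1
    push_cast
    field_simp
    ring
  have main : ibuki p r (τ + 1) = ee (((r : ℂ) ^ 2 - 1) / (8 * (p : ℂ))) * ibuki p r τ := by
    rw [h1, ← hee, mul_div_assoc, div_self (ee_ne_zero _), mul_one]
  refine ⟨main, ?_⟩
  rw [main, ← mul_assoc, ← ee_add]
  congr 2
  ring
end

section
/- Let k ∈ ℝ, ℓ ∈ ℝ, n a nonnegative integer, and f : ℍ → ℂ a holomorphic function. Then 𝔡_{k+ℓ/2}^n(η^ℓ · f) = η^ℓ · 𝔡_k^n(f) on ℍ. Consequently, if f satisfies the modular linear differential equation 𝔡_k^n(f) + Σ_{j=2}^n P_{2j}·𝔡_k^{n−j}(f) = 0 for holomorphic functions P_{2j} on ℍ, then g := η^ℓ·f satisfies 𝔡_{k+ℓ/2}^n(g) + Σ_{j=2}^n P_{2j}·𝔡_{k+ℓ/2}^{n−j}(g) = 0. -/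
open Complex

set_option maxHeartbeats 1000000

-- Lambert series part, to be appended after pre.lean
set_option maxHeartbeats 1000000
noncomputable section AuxLemmas

open Complex

/-- Equiv between ℕ×ℕ and pairs (m, (d,e)) with d*e = m+1. -/
def dae : (ℕ × ℕ) ≃ Σ m : ℕ, {p : ℕ × ℕ // p ∈ Nat.divisorsAntidiagonal (m + 1)} where
  toFun p := ⟨(p.1 + 1) * (p.2 + 1) - 1, ⟨(p.1 + 1, p.2 + 1), by
    rw [Nat.mem_divisorsAntidiagonal]
    dsimp only
    have : 0 < (p.1 + 1) * (p.2 + 1) := Nat.mul_pos p.1.succ_pos p.2.succ_pos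
    omega⟩⟩
  invFun x := (x.2.1.1 - 1, x.2.1.2 - 1)
  left_inv p := by simp
  right_inv := by
    rintro ⟨m, ⟨⟨d, e⟩, h⟩⟩
    have h' := Nat.mem_divisorsAntidiagonal.mp h
    simp only at h' ⊢
    have hd : 0 < d := Nat.pos_of_ne_zero (Nat.left_ne_zero_of_mem_divisorsAntidiagonal h)
    have he : 0 < e := Nat.pos_of_ne_zero (Nat.right_ne_zero_of_mem_divisorsAntidiagonal h)
    have h1 : d - 1 + 1 = d := by omega
    have h2 : e - 1 + 1 = e := by omega
    have h3 : (d - 1 + 1) * (e - 1 + 1) - 1 = m := by rw [h1, h2]; omega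
    subst h3
    simp only [h1, h2]

lemma summable_F {q : ℂ} (hq : ‖q‖ < 1) :
    Summable (fun p : ℕ × ℕ => ((p.1 : ℂ) + 1) * q ^ ((p.1 + 1) * (p.2 + 1))) := by
  have h0 : 0 ≤ ‖q‖ := norm_nonneg q
  have hs : Summable (fun p : ℕ × ℕ =>
      (((p.1 : ℝ) + 1) * ‖q‖ ^ (p.1 + 1)) * ‖q‖ ^ p.2) := by
    have hr : ‖(‖q‖ : ℝ)‖ < 1 := by rw [Real.norm_eq_abs, _root_.abs_of_nonneg h0]; exact hq
    have hgeo : Summable (fun n : ℕ => ‖q‖ ^ n) := summable_geometric_of_lt_one h0 hq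
    have hb1 : Summable (fun n : ℕ => (n : ℝ) ^ 1 * ‖q‖ ^ n) :=
      summable_pow_mul_geometric_of_norm_lt_one 1 hr
    have ha : Summable (fun n : ℕ => ((n : ℝ) + 1) * ‖q‖ ^ (n + 1)) := by
      refine ((hb1.add hgeo).mul_left ‖q‖).congr fun n => ?_
      ring
    exact Summable.mul_of_nonneg (f := fun n : ℕ => ((n : ℝ) + 1) * ‖q‖ ^ (n + 1))
      (g := fun j : ℕ => ‖q‖ ^ j) ha (summable_geometric_of_lt_one h0 hq)
      (fun n => by positivity) (fun j => by positivity)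
  apply Summable.of_norm_bounded hs
  rintro ⟨n, j⟩
  simp only [norm_mul, norm_pow]
  have h1 : ‖(n : ℂ) + 1‖ = (n : ℝ) + 1 := by
    rw [show ((n : ℂ) + 1) = ((n + 1 : ℕ) : ℂ) by push_cast; ring, Complex.norm_natCast]
    push_cast; ring
  rw [h1, mul_assoc]
  gcongr
  calc ‖q‖ ^ ((n + 1) * (j + 1)) ≤ ‖q‖ ^ (n + 1 + j) := by
        apply pow_le_pow_of_le_one h0 hq.le; nlinarith
    _ = ‖q‖ ^ (n + 1) * ‖q‖ ^ j := by rw [pow_add]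

/-- Lambert series identity. -/
lemma lambert {q : ℂ} (hq : ‖q‖ < 1) :
    ∑' n : ℕ, ((n : ℂ) + 1) * q ^ (n + 1) / (1 - q ^ (n + 1))
      = ∑' n : ℕ, ((ArithmeticFunction.sigma 1) (n + 1) : ℂ) * q ^ (n + 1) := by
  set F : ℕ × ℕ → ℂ := fun p => ((p.1 : ℂ) + 1) * q ^ ((p.1 + 1) * (p.2 + 1)) with hF
  have hsum : Summable F := summable_F hq
  -- LHS = ∑' over pairs
  have hL : ∑' p : ℕ × ℕ, F p = ∑' n : ℕ, ((n : ℂ) + 1) * q ^ (n + 1) / (1 - q ^ (n + 1)) := by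
    rw [Summable.tsum_prod hsum]
    refine tsum_congr fun n => ?_
    have hqn : ‖q ^ (n + 1)‖ < 1 := by
      rw [norm_pow]
      calc ‖q‖ ^ (n + 1) ≤ ‖q‖ ^ 1 := pow_le_pow_of_le_one (norm_nonneg q) hq.le (by omega)
        _ < 1 := by simpa using hq
    have hg : ∑' j : ℕ, (q ^ (n + 1)) ^ (j + 1) = q ^ (n + 1) / (1 - q ^ (n + 1)) := by
      have := tsum_geometric_of_norm_lt_one hqn
      calc ∑' j : ℕ, (q ^ (n + 1)) ^ (j + 1)
          = ∑' j : ℕ, q ^ (n + 1) * (q ^ (n + 1)) ^ j := by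
            refine tsum_congr fun j => ?_; ring
        _ = q ^ (n + 1) * (1 - q ^ (n + 1))⁻¹ := by rw [tsum_mul_left, this]
        _ = q ^ (n + 1) / (1 - q ^ (n + 1)) := by rw [div_eq_mul_inv]
    calc ∑' j : ℕ, F (n, j) = ∑' j : ℕ, ((n : ℂ) + 1) * (q ^ (n + 1)) ^ (j + 1) := by
          refine tsum_congr fun j => ?_
          simp only [hF, ← pow_mul]
      _ = ((n : ℂ) + 1) * (q ^ (n + 1) / (1 - q ^ (n + 1))) := by rw [tsum_mul_left, hg]
      _ = ((n : ℂ) + 1) * q ^ (n + 1) / (1 - q ^ (n + 1)) := by ring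
  -- RHS = ∑' over pairs
  have hR : ∑' p : ℕ × ℕ, F p
      = ∑' n : ℕ, ((ArithmeticFunction.sigma 1) (n + 1) : ℂ) * q ^ (n + 1) := by
    have hEq : ∑' x : Σ m : ℕ, {p : ℕ × ℕ // p ∈ Nat.divisorsAntidiagonal (m + 1)},
        F (dae.symm x) = ∑' p : ℕ × ℕ, F p := dae.symm.tsum_eq F
    have hsum2 : Summable fun x : Σ m : ℕ, {p : ℕ × ℕ // p ∈ Nat.divisorsAntidiagonal (m + 1)} =>
        F (dae.symm x) := dae.symm.summable_iff.mpr hsum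
    rw [← hEq, Summable.tsum_sigma hsum2]
    refine tsum_congr fun m => ?_
    have hterm : ∀ x : {p : ℕ × ℕ // p ∈ Nat.divisorsAntidiagonal (m + 1)},
        F (dae.symm ⟨m, x⟩) = (x.1.1 : ℂ) * q ^ (m + 1) := by
      rintro ⟨⟨d, e⟩, h⟩
      have hde : d * e = m + 1 := by have := (Nat.mem_divisorsAntidiagonal.mp h).1; simpa using this
      have hd : 0 < d := Nat.pos_of_ne_zero (Nat.left_ne_zero_of_mem_divisorsAntidiagonal h)
      have he : 0 < e := Nat.pos_of_ne_zero (Nat.right_ne_zero_of_mem_divisorsAntidiagonal h)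
      simp only [dae, Equiv.coe_fn_symm_mk, hF]
      have h1 : d - 1 + 1 = d := by omega
      have h2 : e - 1 + 1 = e := by omega
      have h3 : (d - 1 + 1) * (e - 1 + 1) = m + 1 := by rw [h1, h2]; exact hde
      rw [h3]
      congr 1
      rw [show ((d - 1 : ℕ) : ℂ) + 1 = ((d - 1 + 1 : ℕ) : ℂ) by push_cast; ring, h1]
    calc ∑' x : {p : ℕ × ℕ // p ∈ Nat.divisorsAntidiagonal (m + 1)}, F (dae.symm ⟨m, x⟩)
        = ∑' x : {p : ℕ × ℕ // p ∈ Nat.divisorsAntidiagonal (m + 1)}, (x.1.1 : ℂ) * q ^ (m + 1) :=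
          tsum_congr hterm
      _ = ∑ p ∈ Nat.divisorsAntidiagonal (m + 1), (p.1 : ℂ) * q ^ (m + 1) :=
          Finset.tsum_subtype (Nat.divisorsAntidiagonal (m + 1)) (fun p => (p.1 : ℂ) * q ^ (m + 1))
      _ = ((ArithmeticFunction.sigma 1) (m + 1) : ℂ) * q ^ (m + 1) := by
          rw [Nat.sum_divisorsAntidiagonal (f := fun d e => (d : ℂ) * q ^ (m + 1)),
            ArithmeticFunction.sigma_one_apply]
          push_cast
          rw [Finset.sum_mul]
  rw [← hL, hR]

end AuxLemmas
noncomputable section AuxAnalytic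

open Complex

lemma UH_open : IsOpen UH := isOpen_lt continuous_const Complex.continuous_im

lemma norm_ee (z : ℂ) : ‖ee z‖ = Real.exp (-(2 * Real.pi * z.im)) := by
  rw [ee, Complex.norm_exp]
  congr 1
  simp [Complex.mul_re, Complex.mul_im]

lemma im_nmul (n : ℕ) (z : ℂ) : (((n : ℂ) + 1) * z).im = ((n : ℝ) + 1) * z.im := by
  simp [Complex.mul_im]

lemma norm_ee_nmul (n : ℕ) (z : ℂ) :
    ‖ee (((n : ℂ) + 1) * z)‖ = Real.exp (-(2 * Real.pi * z.im)) ^ (n + 1) := by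
  rw [norm_ee, im_nmul, ← Real.exp_nat_mul]
  congr 1
  push_cast
  ring

lemma norm_ee_lt_one {z : ℂ} (hz : 0 < z.im) (n : ℕ) : ‖ee (((n : ℂ) + 1) * z)‖ < 1 := by
  rw [norm_ee_nmul]
  apply pow_lt_one₀ (Real.exp_nonneg _) _ (Nat.succ_ne_zero n)
  rw [Real.exp_lt_one_iff]
  nlinarith [Real.pi_pos]

lemma one_sub_ee_ne {z : ℂ} (hz : 0 < z.im) (n : ℕ) : 1 - ee (((n : ℂ) + 1) * z) ≠ 0 := by
  intro h
  rw [sub_eq_zero] at h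
  have h2 := norm_ee_lt_one hz n
  rw [← h] at h2
  simp at h2

lemma one_sub_ee_mem_slit {z : ℂ} (hz : 0 < z.im) (n : ℕ) :
    1 - ee (((n : ℂ) + 1) * z) ∈ Complex.slitPlane := by
  rw [Complex.mem_slitPlane_iff]
  left
  have h1 : (ee (((n : ℂ) + 1) * z)).re ≤ ‖ee (((n : ℂ) + 1) * z)‖ :=
    (Complex.re_le_norm _)
  have h2 := norm_ee_lt_one hz n
  simp only [Complex.sub_re, Complex.one_re]
  linarith

/-- `L(z) = ∑ log(1 - q^n)`. -/
def Lfun (z : ℂ) : ℂ := ∑' n : ℕ, Complex.log (1 - ee (((n : ℂ) + 1) * z))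

/-- `S(z) = ∑ n q^n / (1 - q^n)`. -/
def Sfun (z : ℂ) : ℂ :=
  ∑' n : ℕ, ((n : ℂ) + 1) * ee (((n : ℂ) + 1) * z) / (1 - ee (((n : ℂ) + 1) * z))

lemma hasDerivAt_ee_mul (c : ℂ) (z : ℂ) :
    HasDerivAt (fun w => ee (c * w)) (2 * (Real.pi : ℂ) * Complex.I * c * ee (c * z)) z := by
  have h1 : HasDerivAt (fun w : ℂ => (2 * (Real.pi : ℂ) * Complex.I * c) * w)
      (2 * (Real.pi : ℂ) * Complex.I * c) z := by
    simpa using (hasDerivAt_id z).const_mul (2 * (Real.pi : ℂ) * Complex.I * c)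
  have h2 := h1.cexp
  have hfun : (fun w => ee (c * w))
      = fun w => Complex.exp (2 * (Real.pi : ℂ) * Complex.I * c * w) := by
    funext w; rw [ee]; congr 1; ring
  rw [hfun]
  refine h2.congr_deriv ?_
  rw [ee, show 2 * (Real.pi : ℂ) * Complex.I * (c * z)
    = 2 * (Real.pi : ℂ) * Complex.I * c * z by ring]
  ring

lemma hasDerivAt_logterm (n : ℕ) {z : ℂ} (hz : 0 < z.im) :
    HasDerivAt (fun w => Complex.log (1 - ee (((n : ℂ) + 1) * w)))
      (-(2 * (Real.pi : ℂ) * Complex.I * ((n : ℂ) + 1) * ee (((n : ℂ) + 1) * z))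
        / (1 - ee (((n : ℂ) + 1) * z))) z :=
  (((hasDerivAt_ee_mul ((n : ℂ) + 1) z).const_sub 1).clog (one_sub_ee_mem_slit hz n))

lemma summable_logterm {z : ℂ} (hz : 0 < z.im) :
    Summable fun n : ℕ => Complex.log (1 - ee (((n : ℂ) + 1) * z)) := by
  set r := Real.exp (-(2 * Real.pi * z.im)) with hr
  have hr0 : 0 ≤ r := Real.exp_nonneg _
  have hr1 : r < 1 := by
    rw [hr, Real.exp_lt_one_iff]; nlinarith [Real.pi_pos]
  have hsum : Summable (fun n : ℕ => 3 / 2 * r ^ (n + 1)) := by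
    refine ((summable_geometric_of_lt_one hr0 hr1).mul_left (3 / 2 * r)).congr fun n => ?_
    ring
  apply Summable.of_norm_bounded_eventually_nat hsum
  · have htend : Filter.Tendsto (fun n : ℕ => r ^ (n + 1)) Filter.atTop (nhds 0) := by
      have := tendsto_pow_atTop_nhds_zero_of_lt_one hr0 hr1
      exact this.comp (Filter.tendsto_add_atTop_nat 1)
    have hev : ∀ᶠ n : ℕ in Filter.atTop, r ^ (n + 1) < 1 / 2 :=
      htend.eventually_lt_const (by norm_num)
    filter_upwards [hev] with n hn
    have hnorm : ‖-ee (((n : ℂ) + 1) * z)‖ ≤ 1 / 2 := by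
      rw [norm_neg, norm_ee_nmul]
      exact (le_of_lt hn)
    have := Complex.norm_log_one_add_half_le_self hnorm
    rw [show (1 : ℂ) + -ee (((n : ℂ) + 1) * z) = 1 - ee (((n : ℂ) + 1) * z) by ring] at this
    apply this.trans
    rw [norm_neg, norm_ee_nmul]

lemma summable_aux_nat {r : ℝ} (hr0 : 0 ≤ r) (hr1 : r < 1) :
    Summable (fun n : ℕ => ((n : ℝ) + 1) * r ^ (n + 1)) := by
  have hr : ‖r‖ < 1 := by rw [Real.norm_eq_abs, _root_.abs_of_nonneg hr0]; exact hr1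
  have hgeo : Summable (fun n : ℕ => r ^ n) := summable_geometric_of_lt_one hr0 hr1
  have hb1 : Summable (fun n : ℕ => (n : ℝ) ^ 1 * r ^ n) :=
    summable_pow_mul_geometric_of_norm_lt_one 1 hr
  refine ((hb1.add hgeo).mul_left r).congr fun n => ?_
  ring

lemma hasDerivAt_Lfun {τ : ℂ} (hτ : 0 < τ.im) :
    HasDerivAt Lfun (-(2 * (Real.pi : ℂ) * Complex.I) * Sfun τ) τ := by
  set δ := τ.im / 2 with hδ
  have hδ0 : 0 < δ := by positivity
  set r := Real.exp (-(2 * Real.pi * δ)) with hr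
  have hr0 : 0 ≤ r := Real.exp_nonneg _
  have hr0' : 0 < r := Real.exp_pos _
  have hr1 : r < 1 := by
    rw [hr, Real.exp_lt_one_iff]; nlinarith [Real.pi_pos]
  set t : Set ℂ := {z : ℂ | δ < z.im} with ht
  have hto : IsOpen t := isOpen_lt continuous_const Complex.continuous_im
  have htc : IsPreconnected t := (convex_halfSpace_im_gt δ).isPreconnected
  have hmem : τ ∈ t := by simp only [ht, Set.mem_setOf_eq, hδ]; linarith
  set u : ℕ → ℝ := fun n => 2 * Real.pi / (1 - r) * (((n : ℝ) + 1) * r ^ (n + 1)) with hu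
  have hus : Summable u := (summable_aux_nat hr0 hr1).mul_left _
  have hbound : ∀ (n : ℕ) (z : ℂ), z ∈ t →
      ‖-(2 * (Real.pi : ℂ) * Complex.I * ((n : ℂ) + 1) * ee (((n : ℂ) + 1) * z))
        / (1 - ee (((n : ℂ) + 1) * z))‖ ≤ u n := by
    intro n z hzt
    have hzt' : δ < z.im := hzt
    have hz0 : 0 < z.im := lt_trans hδ0 hzt'
    have hq : ‖ee (((n : ℂ) + 1) * z)‖ ≤ r ^ (n + 1) := by
      rw [norm_ee_nmul]
      have hbase : Real.exp (-(2 * Real.pi * z.im)) ≤ r := by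
        rw [hr, Real.exp_le_exp]
        nlinarith [Real.pi_pos]
      exact pow_le_pow_left₀ (Real.exp_nonneg _) hbase _
    have hden : 1 - r ≤ ‖1 - ee (((n : ℂ) + 1) * z)‖ := by
      have h1 : ‖(1 : ℂ)‖ - ‖ee (((n : ℂ) + 1) * z)‖ ≤ ‖1 - ee (((n : ℂ) + 1) * z)‖ :=
        norm_sub_norm_le _ _
      have h2 : r ^ (n + 1) ≤ r := by
        calc r ^ (n + 1) ≤ r ^ 1 := pow_le_pow_of_le_one hr0 hr1.le (by omega)
          _ = r := pow_one r
      simp only [norm_one] at h1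
      linarith
    rw [norm_div, norm_neg]
    have hnum : ‖2 * (Real.pi : ℂ) * Complex.I * ((n : ℂ) + 1) * ee (((n : ℂ) + 1) * z)‖
        ≤ 2 * Real.pi * (((n : ℝ) + 1) * r ^ (n + 1)) := by
      simp only [norm_mul]
      have h1 : ‖(2 : ℂ)‖ = 2 := by simp
      have h2 : ‖((Real.pi : ℝ) : ℂ)‖ = Real.pi := by
        rw [Complex.norm_real, Real.norm_eq_abs, _root_.abs_of_nonneg Real.pi_pos.le]
      have h3 : ‖Complex.I‖ = 1 := by simp
      have h4 : ‖(n : ℂ) + 1‖ = (n : ℝ) + 1 := by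
        rw [show ((n : ℂ) + 1) = ((n + 1 : ℕ) : ℂ) by push_cast; ring, Complex.norm_natCast]
        push_cast; ring
      rw [h1, h2, h3, h4]
      calc 2 * Real.pi * 1 * ((n : ℝ) + 1) * ‖ee (((n : ℂ) + 1) * z)‖
          ≤ 2 * Real.pi * 1 * ((n : ℝ) + 1) * r ^ (n + 1) := by
            gcongr
        _ = 2 * Real.pi * (((n : ℝ) + 1) * r ^ (n + 1)) := by ring
    have hr1' : 0 < 1 - r := by linarith
    calc ‖2 * (Real.pi : ℂ) * Complex.I * ((n : ℂ) + 1) * ee (((n : ℂ) + 1) * z)‖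
          / ‖1 - ee (((n : ℂ) + 1) * z)‖
        ≤ 2 * Real.pi * (((n : ℝ) + 1) * r ^ (n + 1)) / (1 - r) :=
          div_le_div₀ (by positivity) hnum hr1' hden
      _ = u n := by rw [hu]; ring
  have key := hasDerivAt_tsum_of_isPreconnected hus hto htc
    (g := fun (n : ℕ) (z : ℂ) => Complex.log (1 - ee (((n : ℂ) + 1) * z)))
    (g' := fun (n : ℕ) (z : ℂ) =>
      -(2 * (Real.pi : ℂ) * Complex.I * ((n : ℂ) + 1) * ee (((n : ℂ) + 1) * z))
        / (1 - ee (((n : ℂ) + 1) * z)))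
    (fun n z hzt => hasDerivAt_logterm n (lt_trans hδ0 hzt)) hbound hmem
    (summable_logterm hτ) hmem
  have hsval : ∑' n : ℕ,
      -(2 * (Real.pi : ℂ) * Complex.I * ((n : ℂ) + 1) * ee (((n : ℂ) + 1) * τ))
        / (1 - ee (((n : ℂ) + 1) * τ)) = -(2 * (Real.pi : ℂ) * Complex.I) * Sfun τ := by
    rw [Sfun, ← tsum_mul_left]
    refine tsum_congr fun n => ?_
    ring
  rw [hsval] at key
  exact key

end AuxAnalytic
noncomputable section AuxAnalytic2

open Complex

lemma ee_nmul_eq_pow (n : ℕ) (z : ℂ) : ee (((n : ℂ) + 1) * z) = ee z ^ (n + 1) := by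
  rw [ee, ee, ← Complex.exp_nat_mul]
  congr 1
  push_cast
  ring

lemma norm_ee_lt_one' {z : ℂ} (hz : 0 < z.im) : ‖ee z‖ < 1 := by
  rw [norm_ee, Real.exp_lt_one_iff]
  nlinarith [Real.pi_pos]

/-- `E₂ = 1 - 24 S` on the upper half-plane (via the Lambert series identity). -/
lemma E2_eq_Sfun {τ : ℂ} (hτ : 0 < τ.im) : E2 τ = 1 - 24 * Sfun τ := by
  rw [E2, Sfun]
  have h1 : ∑' n : ℕ, ((n : ℂ) + 1) * ee (((n : ℂ) + 1) * τ) / (1 - ee (((n : ℂ) + 1) * τ))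
      = ∑' n : ℕ, ((n : ℂ) + 1) * ee τ ^ (n + 1) / (1 - ee τ ^ (n + 1)) :=
    tsum_congr fun n => by rw [ee_nmul_eq_pow]
  rw [h1, lambert (norm_ee_lt_one' hτ)]

/-- `etaPow l = exp(2πi l z/24 + l L z)` on the upper half-plane. -/
lemma etaPow_eq_exp (l : ℝ) {z : ℂ} (hz : 0 < z.im) :
    etaPow l z = Complex.exp (2 * (Real.pi : ℂ) * Complex.I * ((l : ℂ) * z) / 24
      + (l : ℂ) * Lfun z) := by
  rw [etaPow, ee, Complex.exp_add]
  congr 1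
  · congr 1
    ring
  · have hsum : Summable (fun n : ℕ => (l : ℂ) * Complex.log (1 - ee (((n : ℂ) + 1) * z))) :=
      (summable_logterm hz).mul_left _
    calc ∏' n : ℕ, (1 - ee (((n : ℂ) + 1) * z)) ^ (l : ℂ)
        = ∏' n : ℕ, Complex.exp ((l : ℂ) * Complex.log (1 - ee (((n : ℂ) + 1) * z))) := by
          refine tprod_congr fun n => ?_
          rw [Complex.cpow_def_of_ne_zero (one_sub_ee_ne hz n), mul_comm]
      _ = Complex.exp (∑' n : ℕ, (l : ℂ) * Complex.log (1 - ee (((n : ℂ) + 1) * z))) :=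
          (hsum.hasSum.cexp).tprod_eq
      _ = Complex.exp ((l : ℂ) * Lfun z) := by rw [tsum_mul_left]; rfl

/-- Key derivative: `D(η^l) = (l/24) E₂ η^l`, i.e.
`(η^l)' = 2πi (l/24) E₂ η^l` on the upper half-plane. -/
lemma etaPow_hasDerivAt (l : ℝ) {τ : ℂ} (hτ : 0 < τ.im) :
    HasDerivAt (etaPow l)
      (2 * (Real.pi : ℂ) * Complex.I * ((l : ℂ) / 24) * E2 τ * etaPow l τ) τ := by
  have hlin : HasDerivAt (fun z : ℂ => 2 * (Real.pi : ℂ) * Complex.I * ((l : ℂ) * z) / 24)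
      (2 * (Real.pi : ℂ) * Complex.I * (l : ℂ) / 24) τ := by
    have h0 : HasDerivAt (fun z : ℂ => (l : ℂ) * z) (l : ℂ) τ := by
      simpa using (hasDerivAt_id τ).const_mul (l : ℂ)
    have h1 := (h0.const_mul (2 * (Real.pi : ℂ) * Complex.I)).div_const 24
    exact h1
  have hL := (hasDerivAt_Lfun hτ).const_mul (l : ℂ)
  have hG := (hlin.add hL).cexp
  have hev : (fun z : ℂ => Complex.exp (2 * (Real.pi : ℂ) * Complex.I * ((l : ℂ) * z) / 24
      + (l : ℂ) * Lfun z)) =ᶠ[nhds τ] etaPow l := by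
    filter_upwards [UH_open.mem_nhds (show τ ∈ UH from hτ)] with z hz
    exact (etaPow_eq_exp l hz).symm
  have hfin := hG.congr_of_eventuallyEq hev.symm
  refine hfin.congr_deriv ?_
  simp only [Pi.add_apply]
  rw [← etaPow_eq_exp l hτ, E2_eq_Sfun hτ]
  ring

lemma etaPow_differentiableOn (l : ℝ) : DifferentiableOn ℂ (etaPow l) UH :=
  fun τ hτ => ((etaPow_hasDerivAt l hτ).differentiableAt).differentiableWithinAt

end AuxAnalytic2
noncomputable section AuxAnalytic3

open Complex

lemma sigma_le (m : ℕ) : (ArithmeticFunction.sigma 1) m ≤ (m + 1) ^ 2 := by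
  rw [ArithmeticFunction.sigma_one_apply]
  rcases Nat.eq_zero_or_pos m with rfl | hm
  · simp
  have hsub : m.divisors ⊆ Finset.range (m + 1) := by
    intro d hd
    rw [Finset.mem_range]
    have := Nat.divisor_le hd
    omega
  calc ∑ d ∈ m.divisors, d ≤ ∑ d ∈ m.divisors, m :=
        Finset.sum_le_sum fun d hd => Nat.divisor_le hd
    _ = m.divisors.card * m := by rw [Finset.sum_const, smul_eq_mul]
    _ ≤ (m + 1) * m := by
        have := Finset.card_le_card hsub
        rw [Finset.card_range] at this
        exact Nat.mul_le_mul_right m this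
    _ ≤ (m + 1) ^ 2 := by nlinarith

lemma ee_differentiable : Differentiable ℂ ee := by
  unfold ee
  exact (differentiable_id.const_mul (2 * (Real.pi : ℂ) * Complex.I)).cexp

lemma E2_differentiableOn : DifferentiableOn ℂ E2 UH := by
  have key : ∀ τ ∈ UH, DifferentiableAt ℂ E2 τ := by
    intro τ hτ
    have hτ' : 0 < τ.im := hτ
    set δ := τ.im / 2 with hδ
    have hδ0 : 0 < δ := by positivity
    set r := Real.exp (-(2 * Real.pi * δ)) with hr
    have hr0 : 0 ≤ r := Real.exp_nonneg _
    have hr1 : r < 1 := by rw [hr, Real.exp_lt_one_iff]; nlinarith [Real.pi_pos]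
    have hrn : ‖r‖ < 1 := by rw [Real.norm_eq_abs, _root_.abs_of_nonneg hr0]; exact hr1
    set t : Set ℂ := {z : ℂ | δ < z.im} with ht
    have hto : IsOpen t := isOpen_lt continuous_const Complex.continuous_im
    have hmem : τ ∈ t := by simp only [ht, Set.mem_setOf_eq, hδ]; linarith
    set u : ℕ → ℝ := fun n => ((n : ℝ) + 2) ^ 2 * r ^ (n + 1) with hu
    have hus : Summable u := by
      have h2 : Summable (fun n : ℕ => (n : ℝ) ^ 2 * r ^ n) :=
        summable_pow_mul_geometric_of_norm_lt_one 2 hrn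
      have h1 : Summable (fun n : ℕ => (n : ℝ) ^ 1 * r ^ n) :=
        summable_pow_mul_geometric_of_norm_lt_one 1 hrn
      have hgeo : Summable (fun n : ℕ => r ^ n) := summable_geometric_of_lt_one hr0 hr1
      refine ((h2.add ((h1.mul_left 4).add (hgeo.mul_left 4))).mul_left r).congr fun n => ?_
      ring
    have hcore : DifferentiableOn ℂ
        (fun z => ∑' n : ℕ, ((ArithmeticFunction.sigma 1) (n + 1) : ℂ) * ee z ^ (n + 1)) t := by
      refine differentiableOn_tsum_of_summable_norm hus (fun i => ?_) hto (fun i z hz => ?_)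
      · exact (((ee_differentiable.pow (i + 1)).const_mul _)).differentiableOn
      · have hz' : δ < z.im := hz
        have hee : ‖ee z‖ ≤ r := by
          rw [norm_ee, hr, Real.exp_le_exp]
          nlinarith [Real.pi_pos]
        rw [norm_mul, norm_pow, Complex.norm_natCast]
        calc ((ArithmeticFunction.sigma 1) (i + 1) : ℝ) * ‖ee z‖ ^ (i + 1)
            ≤ (((i : ℝ) + 2) ^ 2) * r ^ (i + 1) := by
              apply mul_le_mul
              · have h := sigma_le (i + 1)
                have h' : (((ArithmeticFunction.sigma 1) (i + 1) : ℕ) : ℝ)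
                    ≤ (((i + 2) ^ 2 : ℕ) : ℝ) := Nat.cast_le.mpr h
                push_cast at h'
                convert h' using 2 <;> push_cast <;> ring
              · exact pow_le_pow_left₀ (norm_nonneg _) hee _
              · positivity
              · positivity
          _ = u i := rfl
    have hE2 : DifferentiableOn ℂ E2 t := by
      have := (differentiableOn_const (c := (1 : ℂ)) (s := t)).sub (hcore.const_mul 24)
      exact this
    exact hE2.differentiableAt (hto.mem_nhds hmem)
  exact fun τ hτ => (key τ hτ).differentiableWithinAt

lemma deriv_differentiableOn {g : ℂ → ℂ} (hg : DifferentiableOn ℂ g UH) :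
    DifferentiableOn ℂ (deriv g) UH :=
  ((hg.analyticOnNhd UH_open).deriv).differentiableOn

lemma serre_differentiableOn {k : ℝ} {g : ℂ → ℂ} (hg : DifferentiableOn ℂ g UH) :
    DifferentiableOn ℂ (serre k g) UH := by
  have h1 : DifferentiableOn ℂ (fun τ => (2 * (Real.pi : ℂ) * Complex.I)⁻¹ * deriv g τ) UH :=
    (deriv_differentiableOn hg).const_mul _
  have h2 : DifferentiableOn ℂ (fun τ => ((k : ℂ) / 12) * E2 τ * g τ) UH :=
    (E2_differentiableOn.const_mul ((k : ℂ) / 12)).mul hg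
  exact h1.sub h2

lemma serreIter_differentiableOn (k : ℝ) (n : ℕ) {f : ℂ → ℂ}
    (hf : DifferentiableOn ℂ f UH) : DifferentiableOn ℂ (serreIter k n f) UH := by
  induction n with
  | zero => exact hf
  | succ i ih => exact serre_differentiableOn ih

lemma serre_congr {k : ℝ} {g₁ g₂ : ℂ → ℂ} (h : ∀ z ∈ UH, g₁ z = g₂ z) {τ : ℂ} (hτ : τ ∈ UH) :
    serre k g₁ τ = serre k g₂ τ := by
  have hev : g₁ =ᶠ[nhds τ] g₂ := Filter.eventually_of_mem (UH_open.mem_nhds hτ) h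
  unfold serre Dop
  rw [hev.deriv_eq, h τ hτ]

/-- One-step conjugation: `𝔡_{k+l/2}(η^l g) = η^l 𝔡_k g`. -/
lemma serre_etaPow_mul (k' l : ℝ) {g : ℂ → ℂ} (hg : DifferentiableOn ℂ g UH) {τ : ℂ}
    (hτ : τ ∈ UH) :
    serre (k' + l / 2) (fun z => etaPow l z * g z) τ = etaPow l τ * serre k' g τ := by
  have hτ' : 0 < τ.im := hτ
  have hη := etaPow_hasDerivAt l hτ'
  have hgd : HasDerivAt g (deriv g τ) τ :=
    (hg.differentiableAt (UH_open.mem_nhds hτ)).hasDerivAt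
  have hmul := hη.mul hgd
  unfold serre Dop
  rw [show deriv (fun z => etaPow l z * g z) τ = deriv (etaPow l * g) τ from rfl, hmul.deriv]
  have hπ : (2 * (Real.pi : ℂ) * Complex.I) ≠ 0 := by
    apply mul_ne_zero (mul_ne_zero two_ne_zero _) Complex.I_ne_zero
    exact_mod_cast Real.pi_ne_zero
  push_cast
  field_simp
  ring

end AuxAnalytic3
/-- `𝔡_{k+ℓ/2}^n(η^ℓ f) = η^ℓ 𝔡_k^n(f)` on ℍ, and consequently
`η^ℓ f` satisfies the MLDE of weight `k+ℓ/2` whenever `f` satisfies the corresponding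
MLDE of weight `k`. -/
theorem stmt_7 (k l : ℝ) (n : ℕ) (f : ℂ → ℂ) (hf : DifferentiableOn ℂ f UH) :
    (∀ τ ∈ UH, serreIter (k + l / 2) n (fun z => etaPow l z * f z) τ
        = etaPow l τ * serreIter k n f τ) ∧
    (∀ P : ℕ → ℂ → ℂ, (∀ j, DifferentiableOn ℂ (P j) UH) →
      (∀ τ ∈ UH, serreIter k n f τ
          + ∑ j ∈ Finset.Icc 2 n, P j τ * serreIter k (n - j) f τ = 0) →
      ∀ τ ∈ UH, serreIter (k + l / 2) n (fun z => etaPow l z * f z) τ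
          + ∑ j ∈ Finset.Icc 2 n,
              P j τ * serreIter (k + l / 2) (n - j) (fun z => etaPow l z * f z) τ = 0) := by
  have main : ∀ m : ℕ, ∀ τ ∈ UH, serreIter (k + l / 2) m (fun z => etaPow l z * f z) τ
      = etaPow l τ * serreIter k m f τ := by
    intro m
    induction m with
    | zero => intro τ hτ; rfl
    | succ i ih =>
      intro τ hτ
      show serre (k + l / 2 + 2 * (i : ℝ)) (serreIter (k + l / 2) i (fun z => etaPow l z * f z)) τ
        = etaPow l τ * serre (k + 2 * (i : ℝ)) (serreIter k i f) τ
      rw [serre_congr (g₂ := fun z => etaPow l z * serreIter k i f z) ih hτ]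
      have harg : k + l / 2 + 2 * (i : ℝ) = (k + 2 * (i : ℝ)) + l / 2 := by ring
      rw [harg]
      exact serre_etaPow_mul (k + 2 * (i : ℝ)) l (serreIter_differentiableOn k i hf) hτ
  refine ⟨main n, ?_⟩
  intro P hP hMLDE τ hτ
  rw [main n τ hτ]
  rw [Finset.sum_congr rfl (fun j _ => by rw [main (n - j) τ hτ])]
  calc etaPow l τ * serreIter k n f τ
        + ∑ j ∈ Finset.Icc 2 n, P j τ * (etaPow l τ * serreIter k (n - j) f τ)
      = etaPow l τ * (serreIter k n f τ
        + ∑ j ∈ Finset.Icc 2 n, P j τ * serreIter k (n - j) f τ) := by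
        rw [mul_add, Finset.mul_sum]
        congr 1
        exact Finset.sum_congr rfl fun j _ => by ring
    _ = etaPow l τ * 0 := by rw [hMLDE τ hτ]
    _ = 0 := mul_zero _
end
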